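/- Let 𝒜 be an N×N complex matrix such that for every subset L ⊆ {1,...,N} and all choices β_ℓ (ℓ∈L) in the closed upper half-plane, the |L|×|L| matrix D(β) + P_L 𝒜 P_L* is invertible, where P_L is the coordinate projection onto the coordinates in L. Then sup over all α₁,...,α_N in the closed upper half-plane of the operator norm ‖(D(α) + 𝒜)^{-1}‖ is finite (in particular each D(α)+𝒜 is invertible). -/

import Mathlib

open Matrix Metric

/-- Membership in the disk `closedBall (-I/2) (1/2)` in algebraic form. -/
lemma mem_disk_iff (s : ℂ) :
    s ∈ closedBall (-Complex.I/2 : ℂ) (1/2) ↔ Complex.normSq s + s.im ≤ 0 := by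
  rw [Metric.mem_closedBall, Complex.dist_eq]
  rw [show s - (-Complex.I/2) = s + Complex.I/2 by ring]
  constructor
  · intro hle
    have h2 := Complex.sq_norm (s + Complex.I/2)
    have habs : (0:ℝ) ≤ ‖s + Complex.I/2‖ := norm_nonneg _
    simp [Complex.normSq_apply, Complex.add_re, Complex.add_im] at h2 ⊢
    nlinarith [h2, habs, hle]
  · intro hle
    have h2 := Complex.sq_norm (s + Complex.I/2)
    have habs : (0:ℝ) ≤ ‖s + Complex.I/2‖ := norm_nonneg _
    simp [Complex.normSq_apply, Complex.add_re, Complex.add_im] at h2 hle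
    nlinarith [h2, habs, hle]

lemma mem_disk_of_im_nonneg (z : ℂ) (hz : 0 ≤ z.im) :
    (z + Complex.I)⁻¹ ∈ closedBall (-Complex.I/2 : ℂ) (1/2) := by
  have hne : z + Complex.I ≠ 0 := by
    intro h0
    have := congrArg Complex.im h0
    simp at this
    linarith
  rw [mem_disk_iff]
  have hpos : 0 < Complex.normSq (z + Complex.I) := Complex.normSq_pos.2 hne
  rw [Complex.normSq_inv, Complex.inv_im]
  have him : (z + Complex.I).im = z.im + 1 := by simp
  rw [him]
  rw [inv_eq_one_div, ← add_div, div_nonpos_iff]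
  right
  constructor
  · -- 1 + -(z.im+1) ≤ 0
    linarith
  · linarith

lemma im_nonneg_of_mem_disk (s : ℂ) (hs : s ∈ closedBall (-Complex.I/2 : ℂ) (1/2))
    (hne : s ≠ 0) : 0 ≤ ((s)⁻¹ - Complex.I).im := by
  rw [mem_disk_iff] at hs
  have hpos : 0 < Complex.normSq s := Complex.normSq_pos.2 hne
  have : ((s)⁻¹ - Complex.I).im = -s.im / Complex.normSq s - 1 := by
    simp [Complex.inv_im]
  rw [this, sub_nonneg, le_div_iff₀ hpos]
  linarith


lemma unit_aux (N : ℕ) (A : Matrix (Fin N) (Fin N) ℂ)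
    (h : ∀ (L : Finset (Fin N)) (β : Fin N → ℂ), (∀ ℓ ∈ L, 0 ≤ (β ℓ).im) →
      IsUnit (Matrix.of (fun i j : L => (if i = j then β i.1 else 0) + A i.1 j.1)))
    (s : Fin N → ℂ) (hs : ∀ j, s j ∈ closedBall (-Complex.I/2 : ℂ) (1/2)) :
    IsUnit (1 + Matrix.diagonal s * (A - Complex.I • 1)) := by
  classical
  rw [← Matrix.mulVec_injective_iff_isUnit, ← Matrix.coe_mulVecLin,
    ← LinearMap.ker_eq_bot, LinearMap.ker_eq_bot']
  intro x hx
  set L : Finset (Fin N) := Finset.univ.filter (fun j => s j ≠ 0) with hL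
  have hmemL : ∀ j, j ∈ L ↔ s j ≠ 0 := by intro j; simp [hL]
  have hβ : ∀ ℓ ∈ L, 0 ≤ ((s ℓ)⁻¹ - Complex.I).im := fun ℓ hℓ =>
    im_nonneg_of_mem_disk _ (hs ℓ) ((hmemL ℓ).mp hℓ)
  have hMc := h L (fun j => (s j)⁻¹ - Complex.I) hβ
  have hent : ∀ i, x i + s i * ((A *ᵥ x) i - Complex.I * x i) = 0 := by
    intro i
    have h1 := congrFun hx i
    simpa [Matrix.mulVecLin_apply, Matrix.add_mulVec, Matrix.one_mulVec,
      ← Matrix.mulVec_mulVec, Matrix.mulVec_diagonal, Matrix.sub_mulVec,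
      Matrix.smul_mulVec, Matrix.neg_mulVec, Pi.smul_apply, smul_eq_mul, sub_eq_add_neg,
      mul_comm] using h1
  have hx0 : ∀ j, s j = 0 → x j = 0 := by
    intro j hj; have h2 := hent j; rw [hj] at h2; simpa using h2
  -- the compressed vector
  set Mc := Matrix.of (fun i j : L => (if i = j then ((s i.1)⁻¹ - Complex.I) else 0) + A i.1 j.1)
    with hMcdef
  have hvec : Mc *ᵥ (fun i : L => x i) = 0 := by
    funext i
    have hsi : s i.1 ≠ 0 := (hmemL i.1).mp i.2
    have h2 := hent i.1
    -- divide h2 by s i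
    have h3 : ((s i.1)⁻¹ - Complex.I) * x i.1 + (A *ᵥ x) i.1 = 0 := by
      have := congrArg (fun z => (s i.1)⁻¹ * z) h2
      field_simp at this ⊢
      ring_nf at this ⊢
      linear_combination this
    have hsum : (∑ j : L, A i.1 j.1 * x j.1) = (A *ᵥ x) i.1 := by
      rw [Finset.sum_coe_sort L (fun j => A i.1 j * x j), Matrix.mulVec, dotProduct]
      apply Finset.sum_subset (Finset.subset_univ L)
      intro j _ hj
      have hxj : x j = 0 := hx0 j (by by_contra hne; exact hj ((hmemL j).mpr hne))
      simp [hxj]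
    simp only [Matrix.mulVec, dotProduct, hMcdef, Matrix.of_apply, Pi.zero_apply]
    rw [Finset.sum_congr rfl (fun j _ => add_mul _ _ _), Finset.sum_add_distrib]
    rw [show (∑ j : L, (if i = j then ((s i.1)⁻¹ - Complex.I) else 0) * x j.1)
        = ((s i.1)⁻¹ - Complex.I) * x i.1 by simp [ite_mul]]
    rw [hsum]
    exact h3
  have hy : (fun i : L => x i) = 0 := by
    have hdet : IsUnit Mc.det := (Matrix.isUnit_iff_isUnit_det Mc).mp hMc
    calc (fun i : L => x i) = (Mc⁻¹ * Mc) *ᵥ (fun i : L => x i) := by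
          rw [Matrix.nonsing_inv_mul Mc hdet, Matrix.one_mulVec]
      _ = Mc⁻¹ *ᵥ (Mc *ᵥ (fun i : L => x i)) := by rw [Matrix.mulVec_mulVec]
      _ = 0 := by rw [hvec, Matrix.mulVec_zero]
  funext j
  by_cases hj : s j = 0
  · exact hx0 j hj
  · exact congrFun hy ⟨j, (hmemL j).mpr hj⟩


/-- entrywise bound for mulVec in the sup norm -/
lemma mulVec_norm_le (N : ℕ) (M : Matrix (Fin N) (Fin N) ℂ) (X : Fin N → ℂ) :
    ‖M *ᵥ X‖ ≤ (∑ i, ∑ j, ‖M i j‖) * ‖X‖ := by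
  have hS : (0:ℝ) ≤ ∑ i, ∑ j, ‖M i j‖ :=
    Finset.sum_nonneg fun i _ => Finset.sum_nonneg fun j _ => norm_nonneg _
  rw [pi_norm_le_iff_of_nonneg (mul_nonneg hS (norm_nonneg _))]
  intro i
  calc ‖(M *ᵥ X) i‖ = ‖∑ j, M i j * X j‖ := rfl
    _ ≤ ∑ j, ‖M i j * X j‖ := norm_sum_le _ _
    _ ≤ ∑ j, ‖M i j‖ * ‖X‖ := by
        apply Finset.sum_le_sum
        intro j _
        rw [norm_mul]
        exact mul_le_mul_of_nonneg_left (norm_le_pi_norm X j) (norm_nonneg _)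
    _ = (∑ j, ‖M i j‖) * ‖X‖ := by rw [Finset.sum_mul]
    _ ≤ (∑ i, ∑ j, ‖M i j‖) * ‖X‖ := by
        apply mul_le_mul_of_nonneg_right _ (norm_nonneg _)
        exact Finset.single_le_sum (fun k _ => Finset.sum_nonneg fun j _ => norm_nonneg _)
          (Finset.mem_univ i)

theorem uniform_invertibility_of_shifted_matrix
    (N : ℕ) (A : Matrix (Fin N) (Fin N) ℂ)
    (h : ∀ (L : Finset (Fin N)) (β : Fin N → ℂ), (∀ ℓ ∈ L, 0 ≤ (β ℓ).im) →
      IsUnit (Matrix.of (fun i j : L => (if i = j then β i.1 else 0) + A i.1 j.1))) :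
    ∃ C : ℝ, ∀ α : Fin N → ℂ, (∀ j, 0 ≤ (α j).im) →
      IsUnit (Matrix.diagonal α + A) ∧
      ∀ X : Fin N → ℂ, ‖(Matrix.diagonal α + A)⁻¹ *ᵥ X‖ ≤ C * ‖X‖ := by
  classical
  set B : Matrix (Fin N) (Fin N) ℂ := A - Complex.I • 1 with hB
  set M : (Fin N → ℂ) → Matrix (Fin N) (Fin N) ℂ :=
    fun s => 1 + Matrix.diagonal s * B with hM
  set K : Set (Fin N → ℂ) :=
    Set.univ.pi (fun _ => closedBall (-Complex.I/2 : ℂ) (1/2)) with hK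
  have hKmem : ∀ s, s ∈ K ↔ ∀ j, s j ∈ closedBall (-Complex.I/2 : ℂ) (1/2) := by
    intro s; simp [hK, Set.mem_pi]
  have hKcompact : IsCompact K :=
    isCompact_univ_pi (fun _ => isCompact_closedBall _ _)
  have hKne : K.Nonempty := ⟨0, by
    rw [hKmem]
    intro j
    simp [Metric.mem_closedBall, dist_eq_norm]⟩
  -- continuity of s ↦ M s
  have hMcont : Continuous M := by
    apply continuous_matrix
    intro i j
    have heq : (fun s => M s i j)
        = fun s : Fin N → ℂ => (1 : Matrix (Fin N) (Fin N) ℂ) i j + s i * B i j := by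
      funext s
      simp [hM, Matrix.add_apply, Matrix.diagonal_mul]
    rw [heq]
    exact continuous_const.add ((continuous_apply i).mul continuous_const)
  have hMunit : ∀ s ∈ K, IsUnit (M s) := fun s hs =>
    unit_aux N A h s ((hKmem s).mp hs)
  have hdetne : ∀ s ∈ K, (M s).det ≠ 0 := by
    intro s hs
    have := (Matrix.isUnit_iff_isUnit_det _).mp (hMunit s hs)
    exact this.ne_zero
  -- the function to bound
  set f : (Fin N → ℂ) → ℝ :=
    fun s => ∑ i, ∑ j, ‖((M s)⁻¹ * Matrix.diagonal s) i j‖ with hf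
  have hfcont : ContinuousOn f K := by
    apply continuousOn_finset_sum; intro i _
    apply continuousOn_finset_sum; intro j _
    apply continuous_norm.comp_continuousOn
    have hentry : ∀ s, ((M s)⁻¹ * Matrix.diagonal s) i j = ((M s).det)⁻¹ * ((M s).adjugate i j * s j) := by
      intro s
      rw [Matrix.mul_apply]
      rw [Finset.sum_eq_single j]
      · rw [Matrix.inv_def, Matrix.smul_apply, Matrix.diagonal_apply_eq,
          Ring.inverse_eq_inv', smul_eq_mul, mul_assoc]
      · intro k _ hk; rw [Matrix.diagonal_apply_ne _ hk, mul_zero]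
      · simp
    simp_rw [hentry]
    apply ContinuousOn.mul
    · exact ContinuousOn.inv₀ (hMcont.matrix_det.continuousOn) hdetne
    · apply ContinuousOn.mul
      · exact ((continuous_apply j).comp ((continuous_apply i).comp hMcont.matrix_adjugate)).continuousOn
      · exact (continuous_apply j).continuousOn
  obtain ⟨s₀, hs₀K, hs₀⟩ := hKcompact.exists_isMaxOn hKne hfcont
  refine ⟨f s₀, ?_⟩
  intro α hα
  set s : Fin N → ℂ := fun j => (α j + Complex.I)⁻¹ with hsdef
  have hsK : s ∈ K := (hKmem s).mpr (fun j => mem_disk_of_im_nonneg (α j) (hα j))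
  have hsne : ∀ j, α j + Complex.I ≠ 0 := by
    intro j h0
    have := congrArg Complex.im h0
    simp at this
    have := hα j
    linarith
  have hid : Matrix.diagonal s * (Matrix.diagonal α + A) = M s := by
    ext i j
    simp only [hM, hB, Matrix.diagonal_mul, Matrix.of_apply, Matrix.add_apply,
      Matrix.one_apply, Matrix.sub_apply, Matrix.smul_apply, Matrix.diagonal_apply, smul_eq_mul]
    by_cases hij : i = j
    · subst hij
      simp only [if_pos rfl, if_true, hsdef]
      field_simp [hsne i]
      ring
    · simp [hij]
  have hdet : IsUnit (M s).det := (Matrix.isUnit_iff_isUnit_det _).mp (hMunit s hsK)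
  have hleft : ((M s)⁻¹ * Matrix.diagonal s) * (Matrix.diagonal α + A) = 1 := by
    rw [mul_assoc, hid, Matrix.nonsing_inv_mul _ hdet]
  have hunit : IsUnit (Matrix.diagonal α + A) := (Matrix.isUnit_iff_isUnit_det _).mpr (Matrix.isUnit_det_of_left_inverse hleft)
  refine ⟨hunit, ?_⟩
  intro X
  rw [Matrix.inv_eq_left_inv hleft]
  calc ‖((M s)⁻¹ * Matrix.diagonal s) *ᵥ X‖
      ≤ (∑ i, ∑ j, ‖((M s)⁻¹ * Matrix.diagonal s) i j‖) * ‖X‖ := mulVec_norm_le _ _ _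
    _ ≤ f s₀ * ‖X‖ := mul_le_mul_of_nonneg_right (hs₀ hsK) (norm_nonneg _)
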